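/- (Classification-calibration of the wave loss, minimizer-sign form; Theorem 1.) Let λ > 0 and a > 0, and let p ∈ [0, 1] with p ≠ 1/2. Then every global minimizer α* of the conditional wave-risk g_p over ℝ (i.e., every α* with g_p(α*) ≤ g_p(α) for all α ∈ ℝ) has the same sign as the Bayes classifier: α* > 0 if p > 1/2 and α* < 0 if p < 1/2. -/
import Mathlib


noncomputable def waveLoss (a lam u : ℝ) : ℝ :=
  (1 / lam) * (1 - 1 / (1 + lam * u ^ 2 * Real.exp (a * u)))

noncomputable def condWaveRisk (a lam p α : ℝ) : ℝ :=
  p * waveLoss a lam (1 - α) + (1 - p) * waveLoss a lam (1 + α)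

lemma hasDerivAt_waveLoss (a lam u : ℝ) (hne : 1 + lam * u ^ 2 * Real.exp (a * u) ≠ 0) :
    HasDerivAt (waveLoss a lam)
      (1 / lam * (lam * (2 * u * Real.exp (a * u) + u ^ 2 * (Real.exp (a * u) * a)) /
        (1 + lam * (u ^ 2 * Real.exp (a * u))) ^ 2)) u := by
  have hne' : 1 + lam * (u ^ 2 * Real.exp (a * u)) ≠ 0 := by rw [← mul_assoc]; exact hne
  have h1 : HasDerivAt (fun u : ℝ => u ^ 2) (2 * u) u := by
    simpa using hasDerivAt_pow 2 u
  have h2 : HasDerivAt (fun u : ℝ => Real.exp (a * u)) (Real.exp (a * u) * a) u := by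
    simpa using ((hasDerivAt_id u).const_mul a).exp
  have h3 := (h1.mul h2).const_mul lam
  have h4 := ((h3.const_add 1).inv hne').const_sub 1
  have h5 := h4.const_mul (1 / lam)
  simp only [neg_div, neg_neg] at h5
  have heq : waveLoss a lam = fun u : ℝ =>
      1 / lam * (1 - (1 + lam * (u ^ 2 * Real.exp (a * u)))⁻¹) := by
    funext v; simp [waveLoss, one_div, mul_assoc]
  rw [heq]
  exact h5

lemma waveLoss_lt (a lam : ℝ) (hlam : 0 < lam) (ha : 0 < a) {u v : ℝ}
    (h : |u| < v) : waveLoss a lam u < waveLoss a lam v := by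
  have hv : 0 < v := lt_of_le_of_lt (abs_nonneg u) h
  have habs := abs_lt.mp h
  have hsq : u ^ 2 < v ^ 2 := sq_lt_sq' habs.1 habs.2
  have hexp : Real.exp (a * u) < Real.exp (a * v) := by
    apply Real.exp_lt_exp.mpr
    have : u < v := habs.2
    nlinarith
  have hh : u ^ 2 * Real.exp (a * u) < v ^ 2 * Real.exp (a * v) := by
    rcases eq_or_ne u 0 with h0 | h0
    · subst h0; have : (0:ℝ) ^ 2 * Real.exp (a * 0) = 0 := by simp
      rw [this]; positivity
    · have hu2 : 0 < u ^ 2 := by positivity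
      exact mul_lt_mul'' hsq hexp (le_of_lt hu2) (Real.exp_pos _).le
  have hDu : 0 < 1 + lam * u ^ 2 * Real.exp (a * u) := by positivity
  have hDv : 0 < 1 + lam * v ^ 2 * Real.exp (a * v) := by positivity
  have hD : 1 + lam * u ^ 2 * Real.exp (a * u) < 1 + lam * v ^ 2 * Real.exp (a * v) := by
    have := mul_lt_mul_of_pos_left hh hlam
    nlinarith
  have hinv : 1 / (1 + lam * v ^ 2 * Real.exp (a * v)) <
      1 / (1 + lam * u ^ 2 * Real.exp (a * u)) :=
    one_div_lt_one_div_of_lt hDu hD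
  unfold waveLoss
  have hl : 0 < 1 / lam := by positivity
  apply mul_lt_mul_of_pos_left _ hl
  linarith

lemma condWaveRisk_sub (a lam p α : ℝ) :
    condWaveRisk a lam p α - condWaveRisk a lam p (-α) =
      (2 * p - 1) * (waveLoss a lam (1 - α) - waveLoss a lam (1 + α)) := by
  have h1 : (1 : ℝ) - -α = 1 + α := by ring
  have h2 : (1 : ℝ) + -α = 1 - α := by ring
  rw [condWaveRisk, condWaveRisk, h1, h2]
  ring

theorem wave_loss_classification_calibrated_minimizer_sign (a lam p : ℝ)
    (hlam : 0 < lam) (ha : 0 < a) (hp : p ∈ Set.Icc (0 : ℝ) 1) (hp' : p ≠ 1 / 2) :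
    ∀ αstar : ℝ, (∀ α : ℝ, condWaveRisk a lam p αstar ≤ condWaveRisk a lam p α) →
      (1 / 2 < p → 0 < αstar) ∧ (p < 1 / 2 → αstar < 0) := by
  intro αstar hmin
  have hne0 : αstar ≠ 0 := by
    intro h0
    subst h0
    have hDpos : (0 : ℝ) < 1 + lam * 1 ^ 2 * Real.exp (a * 1) := by positivity
    set d : ℝ := 1 / lam * (lam * (2 * 1 * Real.exp (a * 1) + 1 ^ 2 * (Real.exp (a * 1) * a)) /
        (1 + lam * (1 ^ 2 * Real.exp (a * 1))) ^ 2) with hd_def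
    have hW : HasDerivAt (waveLoss a lam) d 1 :=
      hasDerivAt_waveLoss a lam 1 (ne_of_gt hDpos)
    have hi1 : HasDerivAt (fun α : ℝ => 1 - α) (-1) (0 : ℝ) := by
      simpa using (hasDerivAt_id (0 : ℝ)).const_sub 1
    have hi2 : HasDerivAt (fun α : ℝ => 1 + α) 1 (0 : ℝ) := by
      simpa using (hasDerivAt_id (0 : ℝ)).const_add 1
    have hW1 : HasDerivAt (waveLoss a lam) d ((fun α : ℝ => 1 - α) 0) := by simpa using hW
    have hW2 : HasDerivAt (waveLoss a lam) d ((fun α : ℝ => 1 + α) 0) := by simpa using hW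
    have hf1 : HasDerivAt (fun α : ℝ => waveLoss a lam (1 - α)) (d * (-1)) 0 :=
      hW1.comp 0 hi1
    have hf2 : HasDerivAt (fun α : ℝ => waveLoss a lam (1 + α)) (d * 1) 0 :=
      hW2.comp 0 hi2
    have htot : HasDerivAt (condWaveRisk a lam p)
        (p * (d * (-1)) + (1 - p) * (d * 1)) 0 :=
      (hf1.const_mul p).add (hf2.const_mul (1 - p))
    have hloc : IsLocalMin (condWaveRisk a lam p) 0 :=
      Filter.Eventually.of_forall hmin
    have hzero := hloc.hasDerivAt_eq_zero htot
    have hdpos : 0 < d := by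
      rw [hd_def]
      have := Real.exp_pos (a * 1)
      positivity
    have h12 : 1 - 2 * p ≠ 0 := by
      intro h; apply hp'; linarith
    have : (1 - 2 * p) * d = 0 := by linarith [hzero]
    rcases mul_eq_zero.mp this with h | h
    · exact h12 h
    · exact (ne_of_gt hdpos) h
  constructor
  · intro hph
    by_contra hle
    push_neg at hle
    have hlt : αstar < 0 := lt_of_le_of_ne hle hne0
    have habs : |1 + αstar| < 1 - αstar := by
      rw [abs_lt]; constructor <;> linarith
    have hL := waveLoss_lt a lam hlam ha habs
    have hkey := condWaveRisk_sub a lam p αstar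
    have hm := hmin (-αstar)
    nlinarith
  · intro hpl
    by_contra hge
    push_neg at hge
    have hlt : 0 < αstar := lt_of_le_of_ne hge (Ne.symm hne0)
    have habs : |1 - αstar| < 1 + αstar := by
      rw [abs_lt]; constructor <;> linarith
    have hL := waveLoss_lt a lam hlam ha habs
    have hkey := condWaveRisk_sub a lam p αstar
    have hm := hmin (-αstar)
    nlinarith
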